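/- arXiv:2007.03959 — 4 statements merged into one kernel-verified Lean document; each statement's English description precedes it below -/
import Mathlib

section
/- Let G be a finite graph, τ a threshold function, and (X_t) the activation process starting from a non-monotone target set X₀. Let u and v be adjacent vertices with τ(u) = deg_G(u) and τ(v) = deg_G(v). Then u ∈ X_t for every t ≥ 0. (Indeed, if u ∉ X_t for some t, then v ∉ X_{t+1} and u ∉ X_{t+2}, so u ∉ X_{t+2k} for all k ≥ 0, contradicting that X₀ is a target set.) -/
open Finset

/-- The non-monotone activation process on `(G, τ)` starting with `X`:
`X_t = {u : |N_G(u) ∩ X_{t-1}| ≥ τ(u)}` for `t ≥ 1`. -/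
def activation {V : Type*} (G : SimpleGraph V) [Fintype V] [DecidableEq V]
    [DecidableRel G.Adj] (τ : V → ℤ) (X : Finset V) : ℕ → Finset V
  | 0 => X
  | t + 1 => Finset.univ.filter
      (fun u => τ u ≤ ((G.neighborFinset u ∩ activation G τ X t).card : ℤ))

/-- `X` is a non-monotone target set for `(G, τ)`. -/
def IsTargetSet {V : Type*} (G : SimpleGraph V) [Fintype V] [DecidableEq V]
    [DecidableRel G.Adj] (τ : V → ℤ) (X : Finset V) : Prop :=
  ∃ t₀ : ℕ, ∀ t ≥ t₀, activation G τ X t = Finset.univ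

/-- Open neighbourhood of a set of vertices: `N_G(S)`. -/
def openNbhd {V : Type*} (G : SimpleGraph V) (S : Set V) : Set V :=
  {v | v ∉ S ∧ ∃ u ∈ S, G.Adj u v}

/-- Closed neighbourhood of a set of vertices: `N_G[S]`. -/
def closedNbhd {V : Type*} (G : SimpleGraph V) (S : Set V) : Set V :=
  S ∪ openNbhd G S

/-- Closed neighbourhood, as a finset. -/
def closedNbhdFinset {V : Type*} (G : SimpleGraph V) [Fintype V] [DecidableEq V]
    [DecidableRel G.Adj] (U : Finset V) : Finset V :=
  U ∪ Finset.univ.filter (fun v => ∃ u ∈ U, G.Adj u v)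

/-- `U` is the vertex set of a connected component of the subgraph of `G` induced by `S`. -/
def IsComponentOf {V : Type*} (G : SimpleGraph V) (S U : Set V) : Prop :=
  U ⊆ S ∧ U.Nonempty ∧ (G.induce U).Connected ∧
    ∀ u ∈ U, ∀ v ∈ S, G.Adj u v → v ∈ U

/-- The subgraph of `G` induced by `S`, as a graph on the subtype `S`. -/
def restrict {V : Type*} (G : SimpleGraph V) (S : Set V) : SimpleGraph S where
  Adj a b := G.Adj a b
  symm := ⟨fun _ _ h => G.adj_symm h⟩
  loopless := ⟨fun _ h => G.irrefl h⟩

instance {V : Type*} (G : SimpleGraph V) (S : Set V) [h : DecidableRel G.Adj] :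
    DecidableRel (restrict G S).Adj := fun a b => h a b

lemma step_out {V : Type*} [Fintype V] [DecidableEq V] (G : SimpleGraph V)
    [DecidableRel G.Adj] (τ : V → ℤ) (X₀ : Finset V) (w x : V) (hadj : G.Adj w x)
    (hx : τ x = (G.degree x : ℤ)) (t : ℕ) (hw : w ∉ activation G τ X₀ t) :
    x ∉ activation G τ X₀ (t + 1) := by
  intro hmem
  simp only [activation, Finset.mem_filter] at hmem
  have hsub : G.neighborFinset x ∩ activation G τ X₀ t ⊂ G.neighborFinset x := by
    refine Finset.ssubset_iff_of_subset (Finset.inter_subset_left) |>.mpr ?_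
    exact ⟨w, by simpa using G.adj_symm hadj, fun h => hw (Finset.mem_inter.mp h).2⟩
  have := Finset.card_lt_card hsub
  rw [G.card_neighborFinset_eq_degree] at this
  omega

theorem stmt_4 {V : Type*} [Fintype V] [DecidableEq V] (G : SimpleGraph V)
    [DecidableRel G.Adj] (τ : V → ℤ) (X₀ : Finset V)
    (hX : IsTargetSet G τ X₀) (u v : V) (hadj : G.Adj u v)
    (hu : τ u = (G.degree u : ℤ)) (hv : τ v = (G.degree v : ℤ)) :
    ∀ t : ℕ, u ∈ activation G τ X₀ t := by
  by_contra h
  push_neg at h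
  obtain ⟨t, ht⟩ := h
  have key : ∀ k : ℕ, u ∉ activation G τ X₀ (t + 2 * k) := by
    intro k
    induction k with
    | zero => simpa using ht
    | succ k ih =>
      have hv' : v ∉ activation G τ X₀ (t + 2 * k + 1) :=
        step_out G τ X₀ u v hadj hv _ ih
      have := step_out G τ X₀ v u (G.adj_symm hadj) hu _ hv'
      have e : t + 2 * (k + 1) = t + 2 * k + 1 + 1 := by ring
      rwa [e]
  obtain ⟨t₀, ht₀⟩ := hX
  have := key t₀
  have heq := ht₀ (t + 2 * t₀) (by omega)
  rw [heq] at this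
  exact this (Finset.mem_univ u)
end

section
/- Let G be a finite graph, τ a threshold function with τ(u) ∈ {0,1,deg_G(u)} for all u, and U the vertex set of a component of order ≥ 2 of G[{u : τ(u)=deg_G(u)}]. A set X ⊆ V(G) is a non-monotone target set for (G,τ) if and only if N_G[U] ⊆ X and X \ N_G[U] is a non-monotone target set for (G',τ'), where G' = G − N_G[U] and τ'(u) = max{0, τ(u) − |N_G(u) ∩ N_G[U]|}. -/
open Finset

section Aux

variable {V : Type*} [Fintype V] [DecidableEq V] {G : SimpleGraph V} [DecidableRel G.Adj]

lemma restrict_adj (S : Set V) (a b : S) : (restrict G S).Adj a b ↔ G.Adj ↑a ↑b := Iff.rfl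

lemma mem_cnf {U : Finset V} {v : V} :
    v ∈ closedNbhdFinset G U ↔ v ∈ U ∨ ∃ u ∈ U, G.Adj u v := by
  simp [closedNbhdFinset]

lemma mem_activation_succ {τ : V → ℤ} {X : Finset V} {t : ℕ} {v : V} :
    v ∈ activation G τ X (t+1) ↔
      τ v ≤ ((G.neighborFinset v ∩ activation G τ X t).card : ℤ) := by
  simp [activation]

/-- every vertex of a component of order ≥ 2 has a neighbour inside it -/
lemma exists_adj_mem {U : Finset V}
    (hconn : (G.induce (↑U : Set V)).Connected) (hcard : 2 ≤ U.card)
    {u : V} (hu : u ∈ U) : ∃ w ∈ U, G.Adj u w := by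
  obtain ⟨v, hv, hne⟩ := Finset.exists_mem_ne (s := U) (by omega) u
  obtain ⟨p⟩ := hconn.preconnected ⟨u, hu⟩ ⟨v, hv⟩
  have hne' : (⟨u, hu⟩ : (↑U : Set V)) ≠ ⟨v, hv⟩ := by
    simp [Subtype.ext_iff]; exact fun h => hne h.symm
  have hadj := p.adj_getVert_succ (i := 0)
    (Nat.pos_of_ne_zero fun h => hne' (SimpleGraph.Walk.eq_of_length_eq_zero h))
  rw [SimpleGraph.Walk.getVert_zero] at hadj
  exact ⟨↑(p.getVert 1), (p.getVert 1).2, hadj⟩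

/-- every vertex of the closed neighbourhood has a neighbour in `U` -/
lemma exists_adj_of_mem_cnf {U : Finset V}
    (hconn : (G.induce (↑U : Set V)).Connected) (hcard : 2 ≤ U.card)
    {v : V} (hv : v ∈ closedNbhdFinset G U) : ∃ u ∈ U, G.Adj u v := by
  rcases mem_cnf.mp hv with h | h
  · obtain ⟨w, hw, hadj⟩ := exists_adj_mem hconn hcard h
    exact ⟨w, hw, hadj.symm⟩
  · exact h

lemma nbhd_subset_cnf {U : Finset V} {u : V} (hu : u ∈ U) :
    G.neighborFinset u ⊆ closedNbhdFinset G U := fun v hv => by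
  rw [SimpleGraph.mem_neighborFinset] at hv
  exact mem_cnf.mpr (Or.inr ⟨u, hu, hv⟩)

variable {τ : V → ℤ} {U : Finset V}
  (hτ : ∀ u, τ u = 0 ∨ τ u = 1 ∨ τ u = (G.degree u : ℤ))
  (hU : IsComponentOf G {u | τ u = (G.degree u : ℤ)} ↑U)
  (hcard : 2 ≤ U.card)

include hU in
/-- active vertex of `U` forces all its neighbours at previous step -/
lemma nbhd_subset_prev {X : Finset V} {t : ℕ} {u : V} (hu : u ∈ U)
    (hm : u ∈ activation G τ X (t+1)) :
    G.neighborFinset u ⊆ activation G τ X t := by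
  have hτu : τ u = (G.degree u : ℤ) := hU.1 hu
  rw [mem_activation_succ, hτu] at hm
  have hle : G.degree u ≤ (G.neighborFinset u ∩ activation G τ X t).card := by
    exact_mod_cast hm
  have hsub : G.neighborFinset u ∩ activation G τ X t ⊆ G.neighborFinset u :=
    inter_subset_left
  have : G.neighborFinset u ⊆ G.neighborFinset u ∩ activation G τ X t := by
    apply Finset.subset_of_eq
    exact (Finset.eq_of_subset_of_card_le hsub
      (by rwa [G.card_neighborFinset_eq_degree])).symm
  exact fun v hv => (Finset.mem_inter.mp (this hv)).2

include hU hcard in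
lemma cnf_subset_prev {X : Finset V} {t : ℕ}
    (h : U ⊆ activation G τ X (t+1)) :
    closedNbhdFinset G U ⊆ activation G τ X t := by
  intro v hv
  obtain ⟨u, hu, hadj⟩ := exists_adj_of_mem_cnf hU.2.2.1 hcard hv
  exact nbhd_subset_prev hU hu (h hu) (by rwa [SimpleGraph.mem_neighborFinset])

include hτ hU in
lemma cnf_subset_next {X : Finset V} {t : ℕ}
    (h : closedNbhdFinset G U ⊆ activation G τ X t) :
    closedNbhdFinset G U ⊆ activation G τ X (t+1) := by
  intro v hv
  rw [mem_activation_succ]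
  by_cases hvU : v ∈ U
  · have hτv : τ v = (G.degree v : ℤ) := hU.1 hvU
    have : G.neighborFinset v ∩ activation G τ X t = G.neighborFinset v := by
      apply Finset.inter_eq_left.mpr
      exact fun w hw => h (nbhd_subset_cnf hvU hw)
    rw [this, hτv, G.card_neighborFinset_eq_degree]
  · obtain ⟨u, hu, hadj⟩ := (mem_cnf.mp hv).resolve_left hvU
    have hvS : v ∉ {u | τ u = (G.degree u : ℤ)} := fun hvS =>
      hvU (hU.2.2.2 u hu v hvS hadj)
    have hτv : τ v ≤ 1 := by
      rcases hτ v with h0 | h1 | hd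
      · omega
      · omega
      · exact absurd hd hvS
    have hmem : u ∈ G.neighborFinset v ∩ activation G τ X t := by
      rw [Finset.mem_inter, SimpleGraph.mem_neighborFinset]
      exact ⟨hadj.symm, h (mem_cnf.mpr (Or.inl hu))⟩
    have : 1 ≤ (G.neighborFinset v ∩ activation G τ X t).card :=
      Finset.card_pos.mpr ⟨u, hmem⟩
    calc τ v ≤ 1 := hτv
    _ ≤ _ := by exact_mod_cast this

include hτ hU in
lemma cnf_subset_all {X : Finset V} (hX : closedNbhdFinset G U ⊆ X) (t : ℕ) :
    closedNbhdFinset G U ⊆ activation G τ X t := by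
  induction t with
  | zero => exact hX
  | succ t ih => exact cnf_subset_next hτ hU ih

include hτ hU in
/-- the key correspondence between the two processes -/
lemma activation_corr {X : Finset V} (hX : closedNbhdFinset G U ⊆ X) (t : ℕ) :
    activation (restrict G {v | v ∉ closedNbhdFinset G U})
      (fun u => max 0 (τ ↑u - ((G.neighborFinset ↑u ∩ closedNbhdFinset G U).card : ℤ)))
      (Finset.univ.filter (fun u => ↑u ∈ X)) t
    = Finset.filter
        (fun u : {v | v ∉ closedNbhdFinset G U} => (u : V) ∈ activation G τ X t)
        Finset.univ := by
  induction t with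
  | zero => rfl
  | succ t ih =>
    ext u
    rw [mem_activation_succ, ih, Finset.mem_filter, mem_activation_succ]
    have hWt : closedNbhdFinset G U ⊆ activation G τ X t := cnf_subset_all hτ hU hX t
    -- card identity
    have himg : ((restrict G {v | v ∉ closedNbhdFinset G U}).neighborFinset u ∩
        Finset.univ.filter (fun w => ↑w ∈ activation G τ X t)).image Subtype.val
        = (G.neighborFinset ↑u ∩ activation G τ X t) \ closedNbhdFinset G U := by
      ext w
      simp only [Finset.mem_image, Finset.mem_inter, Finset.mem_filter,
        SimpleGraph.mem_neighborFinset, Finset.mem_sdiff, Finset.mem_univ, true_and]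
      constructor
      · rintro ⟨a, ⟨hadj, hA⟩, rfl⟩
        exact ⟨⟨hadj, hA⟩, a.2⟩
      · rintro ⟨⟨hadj, hA⟩, hw⟩
        exact ⟨⟨w, hw⟩, ⟨hadj, hA⟩, rfl⟩
    have hcard1 : ((restrict G {v | v ∉ closedNbhdFinset G U}).neighborFinset u ∩
        Finset.univ.filter (fun w => ↑w ∈ activation G τ X t)).card
        = ((G.neighborFinset ↑u ∩ activation G τ X t) \ closedNbhdFinset G U).card := by
      rw [← himg, Finset.card_image_of_injective _ Subtype.val_injective]
    have hsplit : (G.neighborFinset ↑u ∩ activation G τ X t).card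
        = (G.neighborFinset ↑u ∩ closedNbhdFinset G U).card
          + ((G.neighborFinset ↑u ∩ activation G τ X t) \ closedNbhdFinset G U).card := by
      rw [← Finset.card_inter_add_card_sdiff (G.neighborFinset ↑u ∩ activation G τ X t) (closedNbhdFinset G U)]
      congr 2
      ext w
      simp only [Finset.mem_inter]
      exact ⟨fun ⟨⟨h1, _⟩, h2⟩ => ⟨h1, h2⟩, fun ⟨h1, h2⟩ => ⟨⟨h1, hWt h2⟩, h2⟩⟩
    rw [hcard1, hsplit, max_le_iff]
    simp only [Finset.mem_univ, true_and]
    push_cast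
    omega

end Aux

theorem stmt_7 {V : Type*} [Fintype V] [DecidableEq V] (G : SimpleGraph V)
    [DecidableRel G.Adj] (τ : V → ℤ)
    (hτ : ∀ u, τ u = 0 ∨ τ u = 1 ∨ τ u = (G.degree u : ℤ))
    (U : Finset V)
    (hU : IsComponentOf G {u | τ u = (G.degree u : ℤ)} ↑U)
    (hcard : 2 ≤ U.card) (X : Finset V) :
    IsTargetSet G τ X ↔
      (closedNbhdFinset G U ⊆ X ∧
        IsTargetSet (restrict G {v | v ∉ closedNbhdFinset G U})
          (fun u => max 0 (τ ↑u - ((G.neighborFinset ↑u ∩ closedNbhdFinset G U).card : ℤ)))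
          (Finset.univ.filter (fun u => ↑u ∈ X))) := by
  constructor
  · rintro ⟨t₀, ht₀⟩
    have hX : closedNbhdFinset G U ⊆ X := by
      have hdown : ∀ d : ℕ, closedNbhdFinset G U ⊆ activation G τ X (t₀ - d) := by
        intro d
        induction d with
        | zero =>
          rw [Nat.sub_zero, ht₀ t₀ le_rfl]
          exact Finset.subset_univ _
        | succ d ih =>
          rcases Nat.eq_zero_or_pos (t₀ - d) with h0 | hpos
          · rw [Nat.sub_succ, h0]
            simpa [h0] using ih
          · have heq : t₀ - d = (t₀ - (d+1)) + 1 := by omega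
            rw [heq] at ih
            exact cnf_subset_prev hU hcard
              (fun u hu => ih (mem_cnf.mpr (Or.inl hu)))
      have := hdown t₀
      simpa [activation] using this
    refine ⟨hX, t₀, fun t ht => ?_⟩
    rw [activation_corr hτ hU hX t, ht₀ t ht]
    simp
  · rintro ⟨hX, t₀, ht₀⟩
    refine ⟨t₀, fun t ht => ?_⟩
    have hco := activation_corr hτ hU hX t
    rw [ht₀ t ht] at hco
    apply Finset.eq_univ_of_forall
    intro v
    by_cases hv : v ∈ closedNbhdFinset G U
    · exact cnf_subset_all hτ hU hX t hv
    · have : (⟨v, hv⟩ : {v | v ∉ closedNbhdFinset G U}) ∈ (Finset.univ :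
        Finset {v | v ∉ closedNbhdFinset G U}) := Finset.mem_univ _
      rw [hco, Finset.mem_filter] at this
      exact this.2
end

section
/- Let G, τ be as follows: τ(u) ∈ {0,1,deg_G(u)} for all u and no two adjacent vertices both have threshold equal to their degree. Let U be the vertex set of a component of order ≥ 2 of G[{u : τ(u) ∈ {0,1}}] with τ ≡ 1 on U, and suppose G[U] is bipartite with partite sets A and B. Set A' = N_G(B) \ N_G[A], B' = N_G(A) \ N_G[B], C = N_G(A) ∩ N_G(B). If X is a non-monotone target set for (G,τ), then X ∩ (A ∪ A' ∪ C) ≠ ∅ and X ∩ (B ∪ B' ∪ C) ≠ ∅. -/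
open Finset

/-- One side of the bipartition together with its private/common outside neighbours. -/
def side {V : Type*} (G : SimpleGraph V) (A B : Set V) : Set V :=
  A ∪ (openNbhd G B \ closedNbhd G A) ∪ (openNbhd G A ∩ openNbhd G B)

lemma walk_edge {V : Type*} (G : SimpleGraph V) (U : Set V) :
    ∀ {x y : U} (_ : (G.induce U).Walk x y), x ≠ y →
      ∃ p ∈ U, ∃ q ∈ U, G.Adj p q := by
  intro x y w
  induction w with
  | nil => intro h; exact absurd rfl h
  | @cons a b c h p _ => intro _; exact ⟨a, a.2, b, b.2, h⟩

lemma side_nonempty {V : Type*} [DecidableEq V] (G : SimpleGraph V) (U A B : Finset V)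
    (hconn : (G.induce (↑U : Set V)).Connected) (hcard : 2 ≤ U.card)
    (hAB : A ∪ B = U) (hB : ∀ b ∈ B, ∀ b' ∈ B, ¬ G.Adj b b') : A.Nonempty := by
  by_contra hA
  rw [Finset.not_nonempty_iff_eq_empty] at hA
  subst hA
  rw [Finset.empty_union] at hAB
  subst hAB
  obtain ⟨u, hu, v, hv, huv⟩ := Finset.one_lt_card.mp (by omega : 1 < B.card)
  obtain ⟨w⟩ := hconn.preconnected ⟨u, hu⟩ ⟨v, hv⟩
  obtain ⟨p, hp, q, hq, hpq⟩ := walk_edge G (↑B) w (by simp [Subtype.ext_iff]; exact huv)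
  exact hB p hp q hq hpq

lemma key_step {V : Type*} [Fintype V] [DecidableEq V] (G : SimpleGraph V)
    [DecidableRel G.Adj] (τ : V → ℤ)
    (hτ : ∀ u, τ u = 0 ∨ τ u = 1 ∨ τ u = (G.degree u : ℤ))
    (U A B : Finset V)
    (hU : IsComponentOf G {u | τ u = 0 ∨ τ u = 1} ↑U)
    (hone : ∀ u ∈ U, τ u = 1)
    (hAB : A ∪ B = U)
    (hB : ∀ b ∈ B, ∀ b' ∈ B, ¬ G.Adj b b')
    (X : Finset V) (t : ℕ)
    (h : ∀ x ∈ activation G τ X t, x ∉ side G (↑A) (↑B)) :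
    ∀ x ∈ activation G τ X (t + 1), x ∉ side G (↑B) (↑A) := by
  obtain ⟨hUS, -, -, hclose⟩ := hU
  have hAU : ∀ a ∈ A, a ∈ U := fun a ha => hAB ▸ Finset.mem_union_left B ha
  have hBU : ∀ b ∈ B, b ∈ U := fun b hb => hAB ▸ Finset.mem_union_right A hb
  intro x hx hside
  have hx' : τ x ≤ ((G.neighborFinset x ∩ activation G τ X t).card : ℤ) := by
    simp only [activation, Finset.mem_filter] at hx
    exact hx.2
  -- split according to which part of `side G B A` contains x
  rcases hside with (hxB | hx2) | hx3
  · -- x ∈ B : τ x = 1, but all neighbours of x lie in side G A B, hence inactive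
    have hxB' : x ∈ B := hxB
    have hτx : τ x = 1 := hone x (hBU x hxB')
    have hnbr : G.neighborFinset x ∩ activation G τ X t = ∅ := by
      rw [Finset.eq_empty_iff_forall_notMem]
      intro v hv
      rw [Finset.mem_inter, SimpleGraph.mem_neighborFinset] at hv
      obtain ⟨hadj, hvact⟩ := hv
      apply h v hvact
      by_cases hvS : τ v = 0 ∨ τ v = 1
      · have hvU : v ∈ U := hclose x (hBU x hxB') v hvS hadj
        have : v ∈ A ∪ B := hAB ▸ hvU
        rcases Finset.mem_union.mp this with hvA | hvB
        · exact Or.inl (Or.inl hvA)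
        · exact absurd hadj (hB x hxB' v hvB)
      · -- v ∉ U
        have hvU : v ∉ U := fun hvU => hvS (Or.inr (hone v hvU))
        have hvB : v ∉ (↑B : Set V) := fun hvB => hvU (hBU v hvB)
        have hvA : v ∉ (↑A : Set V) := fun hvA => hvU (hAU v hvA)
        have hvNB : v ∈ openNbhd G (↑B : Set V) := ⟨hvB, x, hxB', hadj⟩
        by_cases hvNA : v ∈ openNbhd G (↑A : Set V)
        · exact Or.inr ⟨hvNA, hvNB⟩
        · exact Or.inl (Or.inr ⟨hvNB, fun hc => hc.elim hvA hvNA⟩)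
    rw [hnbr] at hx'
    simp [hτx] at hx'
  all_goals {
    -- x ∈ openNbhd A, and x ∉ U; so τ x = deg x and all neighbours must be active
    first
    | (obtain ⟨⟨hxnA, a, haA, hadj⟩, hxnc⟩ := hx2;
       have hxnB : x ∉ (↑B : Set V) := fun hc => hxnc (Or.inl hc))
    | (obtain ⟨⟨hxnB, -, -⟩, ⟨hxnA, a, haA, hadj⟩⟩ := hx3)
    have hxU : x ∉ U := by
      intro hxU
      rcases Finset.mem_union.mp (hAB ▸ hxU) with hc | hc
      · exact hxnA hc
      · exact hxnB hc
    have hτx : τ x = (G.degree x : ℤ) := by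
      rcases hτ x with h0 | h1 | hd
      · exact absurd (hclose a (hAU a haA) x (Or.inl h0) hadj) hxU
      · exact absurd (hclose a (hAU a haA) x (Or.inr h1) hadj) hxU
      · exact hd
    rw [hτx] at hx'
    have hsub : G.neighborFinset x ⊆ activation G τ X t := by
      have hle : (G.neighborFinset x).card ≤
          (G.neighborFinset x ∩ activation G τ X t).card := by
        rw [G.card_neighborFinset_eq_degree x]; exact_mod_cast hx'
      have := Finset.eq_of_subset_of_card_le (Finset.inter_subset_left
        (s₂ := activation G τ X t)) hle
      intro v hv
      have : v ∈ G.neighborFinset x ∩ activation G τ X t := by rw [this]; exact hv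
      exact (Finset.mem_inter.mp this).2
    have haN : a ∈ G.neighborFinset x := by
      rw [SimpleGraph.mem_neighborFinset]; exact hadj.symm
    exact h a (hsub haN) (Or.inl (Or.inl haA))
  }

lemma key_iter {V : Type*} [Fintype V] [DecidableEq V] (G : SimpleGraph V)
    [DecidableRel G.Adj] (τ : V → ℤ)
    (hτ : ∀ u, τ u = 0 ∨ τ u = 1 ∨ τ u = (G.degree u : ℤ))
    (U A B : Finset V)
    (hU : IsComponentOf G {u | τ u = 0 ∨ τ u = 1} ↑U)
    (hone : ∀ u ∈ U, τ u = 1)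
    (hAB : A ∪ B = U)
    (hA : ∀ a ∈ A, ∀ a' ∈ A, ¬ G.Adj a a')
    (hB : ∀ b ∈ B, ∀ b' ∈ B, ¬ G.Adj b b')
    (X : Finset V)
    (h : ∀ x ∈ activation G τ X 0, x ∉ side G (↑A) (↑B)) :
    ∀ k, ∀ x ∈ activation G τ X (2 * k), x ∉ side G (↑A) (↑B) := by
  intro k
  induction k with
  | zero => exact h
  | succ n ih =>
      have h1 := key_step G τ hτ U A B hU hone hAB hB X (2 * n) ih
      have h2 := key_step G τ hτ U B A hU hone (by rw [Finset.union_comm]; exact hAB)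
        hA X (2 * n + 1) h1
      have : 2 * (n + 1) = 2 * n + 1 + 1 := by ring
      rw [this]
      exact h2

lemma main_half {V : Type*} [Fintype V] [DecidableEq V] (G : SimpleGraph V)
    [DecidableRel G.Adj] (τ : V → ℤ)
    (hτ : ∀ u, τ u = 0 ∨ τ u = 1 ∨ τ u = (G.degree u : ℤ))
    (U A B : Finset V)
    (hU : IsComponentOf G {u | τ u = 0 ∨ τ u = 1} ↑U)
    (hcard : 2 ≤ U.card)
    (hone : ∀ u ∈ U, τ u = 1)
    (hAB : A ∪ B = U)
    (hA : ∀ a ∈ A, ∀ a' ∈ A, ¬ G.Adj a a')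
    (hB : ∀ b ∈ B, ∀ b' ∈ B, ¬ G.Adj b b')
    (X : Finset V) (hX : IsTargetSet G τ X)
    (h : ∀ x ∈ X, x ∉ side G (↑A) (↑B)) : False := by
  obtain ⟨a, haA⟩ := side_nonempty G U A B hU.2.2.1 hcard hAB hB
  obtain ⟨t₀, ht₀⟩ := hX
  have hiter := key_iter G τ hτ U A B hU hone hAB hA hB X h t₀
  rw [ht₀ (2 * t₀) (by omega)] at hiter
  exact hiter a (Finset.mem_univ a) (Or.inl (Or.inl haA))

theorem stmt_9 {V : Type*} [Fintype V] [DecidableEq V] (G : SimpleGraph V)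
    [DecidableRel G.Adj] (τ : V → ℤ)
    (hτ : ∀ u, τ u = 0 ∨ τ u = 1 ∨ τ u = (G.degree u : ℤ))
    (hedge : ∀ u v, G.Adj u v →
      ¬ (τ u = (G.degree u : ℤ) ∧ τ v = (G.degree v : ℤ)))
    (U A B : Finset V)
    (hU : IsComponentOf G {u | τ u = 0 ∨ τ u = 1} ↑U)
    (hcard : 2 ≤ U.card)
    (hone : ∀ u ∈ U, τ u = 1)
    (hAB : A ∪ B = U) (hdisj : Disjoint A B)
    (hA : ∀ a ∈ A, ∀ a' ∈ A, ¬ G.Adj a a')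
    (hB : ∀ b ∈ B, ∀ b' ∈ B, ¬ G.Adj b b')
    (X : Finset V) (hX : IsTargetSet G τ X) :
    (∃ x ∈ X, x ∈ (↑A : Set V) ∪ (openNbhd G ↑B \ closedNbhd G ↑A) ∪
        (openNbhd G ↑A ∩ openNbhd G ↑B)) ∧
    (∃ x ∈ X, x ∈ (↑B : Set V) ∪ (openNbhd G ↑A \ closedNbhd G ↑B) ∪
        (openNbhd G ↑A ∩ openNbhd G ↑B)) := by
  constructor
  · by_contra hc
    push_neg at hc
    exact main_half G τ hτ U A B hU hcard hone hAB hA hB X hX hc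
  · by_contra hc
    push_neg at hc
    refine main_half G τ hτ U B A hU hcard hone
      (by rw [Finset.union_comm]; exact hAB) hB hA X hX ?_
    intro x hx hs
    apply hc x hx
    rcases hs with (h1 | h2) | h3
    · exact Or.inl (Or.inl h1)
    · exact Or.inl (Or.inr h2)
    · exact Or.inr ⟨h3.2, h3.1⟩
end

section
/- Let G be a finite graph, τ a threshold function with τ(u) ∈ {0,1,deg_G(u)} for all u such that no edge joins two vertices whose thresholds equal their degrees. Then a set X ⊆ V(G) is a non-monotone target set for (G,τ) if and only if: (1a) for every non-bipartite component with vertex set U of G[{u : τ(u)=1 or τ(u)=0}] with |U| ≥ 2 and τ ≡ 1 on U, X ∩ N_G[U] ≠ ∅; (1b) for every such bipartite component with partite sets A, B, setting A' = N_G(B)\N_G[A], B' = N_G(A)\N_G[B], C = N_G(A)∩N_G(B), both X ∩ (A∪A'∪C) ≠ ∅ and X ∩ (B∪B'∪C) ≠ ∅; and (2) for every vertex u with τ(u)=1 all of whose neighbours v have τ(v)=deg_G(v), there exist neighbours v₁, v₂ of u with v₁ ∈ X and N_G(v₂) ⊆ X. -/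
open Finset

section Aux

variable {V : Type*} [Fintype V] [DecidableEq V] {G : SimpleGraph V} [DecidableRel G.Adj]
  {τ : V → ℤ} {X : Finset V} {u v : V} {t : ℕ}

lemma mem_act_succ :
    u ∈ activation G τ X (t+1) ↔ τ u ≤ ((G.neighborFinset u ∩ activation G τ X t).card : ℤ) := by
  simp [activation]

lemma act_zero (h : τ u = 0) : u ∈ activation G τ X (t+1) := by
  rw [mem_act_succ, h]; exact_mod_cast Nat.zero_le _

lemma act_one_step (h : τ u = 1) (hadj : G.Adj u v) (hv : v ∈ activation G τ X t) :
    u ∈ activation G τ X (t+1) := by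
  rw [mem_act_succ, h]
  have : 0 < (G.neighborFinset u ∩ activation G τ X t).card :=
    Finset.card_pos.mpr ⟨v, Finset.mem_inter.mpr ⟨(SimpleGraph.mem_neighborFinset G u v).mpr hadj, hv⟩⟩
  exact_mod_cast this

lemma act_deg_step (h : τ u = (G.degree u : ℤ))
    (hv : ∀ v ∈ G.neighborFinset u, v ∈ activation G τ X t) :
    u ∈ activation G τ X (t+1) := by
  rw [mem_act_succ, h]
  have : G.neighborFinset u ∩ activation G τ X t = G.neighborFinset u :=
    Finset.inter_eq_left.mpr (fun x hx => hv x hx)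
  rw [this, G.card_neighborFinset_eq_degree u]

lemma act_one_elim (h : τ u = 1) (hu : u ∈ activation G τ X (t+1)) :
    ∃ v, G.Adj u v ∧ v ∈ activation G τ X t := by
  rw [mem_act_succ, h] at hu
  have : 0 < (G.neighborFinset u ∩ activation G τ X t).card := by exact_mod_cast hu
  obtain ⟨v, hv⟩ := Finset.card_pos.mp this
  rw [Finset.mem_inter, SimpleGraph.mem_neighborFinset] at hv
  exact ⟨v, hv.1, hv.2⟩

lemma act_deg_elim (h : τ u = (G.degree u : ℤ)) (hu : u ∈ activation G τ X (t+1)) :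
    ∀ v ∈ G.neighborFinset u, v ∈ activation G τ X t := by
  rw [mem_act_succ, h] at hu
  have hle : G.degree u ≤ (G.neighborFinset u ∩ activation G τ X t).card := by exact_mod_cast hu
  rw [← G.card_neighborFinset_eq_degree u] at hle
  have heq := Finset.eq_of_subset_of_card_le Finset.inter_subset_left hle
  intro v hv
  have hv' : v ∈ G.neighborFinset u ∩ activation G τ X t := by rw [heq]; exact hv
  exact (Finset.mem_inter.mp hv').2

end Aux


section Graph
variable {W : Type*} {H : SimpleGraph W}

lemma exists_adj_of_walk_ne {x y : W} (w : H.Walk x y) (h : x ≠ y) : ∃ z, H.Adj x z := by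
  cases w with
  | nil => exact absurd rfl h
  | cons h' p => exact ⟨_, h'⟩

lemma exists_adj_of_preconnected (hp : H.Preconnected) {x y : W} (hxy : x ≠ y) (z : W) :
    ∃ w, H.Adj z w := by
  by_cases hz : z = x
  · subst hz
    obtain ⟨p⟩ := hp z y
    exact exists_adj_of_walk_ne p hxy
  · obtain ⟨p⟩ := hp z x
    exact exists_adj_of_walk_ne p hz

lemma exists_odd_closed_walk (hc : H.Connected) (hnb : ¬ H.Colorable 2) :
    ∃ (x : W) (w : H.Walk x x), Odd w.length := by
  by_contra h
  push_neg at h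
  apply hnb
  have hne : Nonempty W := hc.nonempty
  obtain ⟨x₀⟩ := hne
  have hreach : ∀ v, H.Reachable x₀ v := fun v => hc.preconnected x₀ v
  classical
  let wk : ∀ v, H.Walk x₀ v := fun v => Classical.choice (hreach v)
  refine ⟨SimpleGraph.Coloring.mk
    (fun v => (⟨(wk v).length % 2, Nat.mod_lt _ (by norm_num)⟩ : Fin 2)) ?_⟩
  intro a b hab hcol
  have hpar : (wk a).length % 2 = (wk b).length % 2 := by
    simpa [Fin.mk.injEq] using hcol
  have hclosed := h x₀ ((wk a).append (SimpleGraph.Walk.cons hab (wk b).reverse))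
  rw [Nat.not_odd_iff_even] at hclosed
  have hlen : ((wk a).append (SimpleGraph.Walk.cons hab (wk b).reverse)).length
      = (wk a).length + ((wk b).length + 1) := by
    rw [SimpleGraph.Walk.length_append, SimpleGraph.Walk.length_cons,
      SimpleGraph.Walk.length_reverse]
  rw [hlen] at hclosed
  rw [Nat.even_iff] at hclosed
  omega

end Graph

section Perm
variable {V : Type*} [Fintype V] [DecidableEq V] (G : SimpleGraph V) [DecidableRel G.Adj]
  (τ : V → ℤ) (X : Finset V)

/-- `v` is permanently active from some time on. -/
def perm (v : V) : Prop := ∃ T : ℕ, ∀ t ≥ T, v ∈ activation G τ X t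

variable {G τ X}

lemma perm_zero {v : V} (h : τ v = 0) : perm G τ X v := by
  refine ⟨1, fun t ht => ?_⟩
  obtain ⟨s, rfl⟩ : ∃ s, t = s + 1 := ⟨t - 1, by omega⟩
  exact act_zero h

lemma perm_one {u v : V} (h : τ u = 1) (hadj : G.Adj u v) (hv : perm G τ X v) :
    perm G τ X u := by
  obtain ⟨T, hT⟩ := hv
  refine ⟨T + 1, fun t ht => ?_⟩
  obtain ⟨s, rfl⟩ : ∃ s, t = s + 1 := ⟨t - 1, by omega⟩
  exact act_one_step h hadj (hT s (by omega))

lemma perm_deg {u : V} (h : τ u = (G.degree u : ℤ))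
    (hv : ∀ v ∈ G.neighborFinset u, perm G τ X v) : perm G τ X u := by
  classical
  choose f hf using hv
  set T := (G.neighborFinset u).attach.sup (fun z => f z.1 z.2) with hTdef
  refine ⟨T + 1, fun t ht => ?_⟩
  obtain ⟨s, rfl⟩ : ∃ s, t = s + 1 := ⟨t - 1, by omega⟩
  refine act_deg_step h (fun v hvm => hf v hvm s ?_)
  have hle : f v hvm ≤ T :=
    Finset.le_sup (f := fun z => f z.1 z.2) (Finset.mem_attach _ ⟨v, hvm⟩)
  omega

lemma perm_spread {S : Set V} (hS : ∀ w ∈ S, τ w = 0 ∨ τ w = 1) :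
    ∀ a b : S, (restrict G S).Reachable a b → perm G τ X ↑a → perm G τ X ↑b := by
  intro a b hr ha
  obtain ⟨w⟩ := hr
  induction w with
  | nil => exact ha
  | @cons x c b h p ih =>
    refine ih ?_
    rcases hS ↑c c.2 with h0 | h1
    · exact perm_zero h0
    · exact perm_one h1 (G.adj_symm h) ha

lemma act_walk {S : Set V} (hall : ∀ w ∈ S, τ w = 1)
    {a b : S} (w : (restrict G S).Walk a b) :
    ∀ s, (a : V) ∈ activation G τ X s → (b : V) ∈ activation G τ X (s + w.length) := by
  induction w with
  | nil => intro s hs; simpa using hs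
  | @cons x c y h p ih =>
    intro s hs
    have hc : (c : V) ∈ activation G τ X (s + 1) :=
      act_one_step (hall _ c.2) (G.adj_symm h) hs
    have := ih (s + 1) hc
    rw [SimpleGraph.Walk.length_cons]
    have heq : s + (p.length + 1) = s + 1 + p.length := by omega
    rw [heq]
    exact this

lemma act_step2 {u c : V} (hu1 : τ u = 1) (hc1 : τ c = 1) (hadj : G.Adj u c) (s : ℕ)
    (hs : u ∈ activation G τ X s) : u ∈ activation G τ X (s + 2) :=
  act_one_step hu1 hadj (act_one_step hc1 (G.adj_symm hadj) hs)

lemma perm_sing (hτ : ∀ u, τ u = 0 ∨ τ u = 1 ∨ τ u = (G.degree u : ℤ))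
    (hedge : ∀ u v, G.Adj u v → ¬ (τ u = (G.degree u : ℤ) ∧ τ v = (G.degree v : ℤ)))
    {u v₁ v₂ : V}
    (h1 : G.Adj u v₁) (h2 : G.Adj u v₂)
    (ht1 : τ v₁ = (G.degree v₁ : ℤ)) (ht2 : τ v₂ = (G.degree v₂ : ℤ))
    (hx1 : v₁ ∈ X) (hx2 : G.neighborFinset v₂ ⊆ X) : ∀ s, u ∈ activation G τ X s := by
  have hlow : ∀ v w, τ v = (G.degree v : ℤ) → G.Adj v w → τ w = 0 ∨ τ w = 1 := by
    intro v w htv hadj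
    rcases hτ w with h | h | h
    · exact Or.inl h
    · exact Or.inr h
    · exact absurd ⟨htv, h⟩ (hedge v w hadj)
  have hnstep : ∀ v, τ v = (G.degree v : ℤ) → ∀ s, v ∈ activation G τ X s →
      ∀ w ∈ G.neighborFinset v, w ∈ activation G τ X (s + 1) := by
    intro v htv s hs w hw
    rw [SimpleGraph.mem_neighborFinset] at hw
    rcases hlow v w htv hw with h0 | h1
    · exact act_zero h0
    · exact act_one_step h1 (G.adj_symm hw) hs
  have chain1 : ∀ k, v₁ ∈ activation G τ X (2 * k) ∧
      ∀ w ∈ G.neighborFinset v₁, w ∈ activation G τ X (2 * k + 1) := by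
    intro k
    induction k with
    | zero => exact ⟨hx1, hnstep v₁ ht1 0 hx1⟩
    | succ k ih =>
      have hv1 : v₁ ∈ activation G τ X (2 * (k + 1)) := by
        exact act_deg_step ht1 ih.2
      exact ⟨hv1, hnstep v₁ ht1 (2 * (k + 1)) hv1⟩
  have chain2 : ∀ k, (∀ w ∈ G.neighborFinset v₂, w ∈ activation G τ X (2 * k)) ∧
      v₂ ∈ activation G τ X (2 * k + 1) := by
    intro k
    induction k with
    | zero => exact ⟨fun w hw => hx2 hw, act_deg_step ht2 (fun w hw => hx2 hw)⟩
    | succ k ih =>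
      have hN : ∀ w ∈ G.neighborFinset v₂, w ∈ activation G τ X (2 * (k + 1)) := by
        intro w hw
        have hthis := hnstep v₂ ht2 (2 * k + 1) ih.2 w hw
        have heq : 2 * k + 1 + 1 = 2 * (k + 1) := by omega
        rwa [heq] at hthis
      exact ⟨hN, act_deg_step ht2 hN⟩
  intro s
  rcases Nat.even_or_odd s with ⟨k, hk⟩ | ⟨k, hk⟩
  · rw [show s = 2 * k from by omega]
    exact (chain2 k).1 u (by rw [SimpleGraph.mem_neighborFinset]; exact G.adj_symm h2)
  · rw [show s = 2 * k + 1 from by omega]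
    exact (chain1 k).2 u (by rw [SimpleGraph.mem_neighborFinset]; exact G.adj_symm h1)

end Perm

section Nec
variable {V : Type*} [Fintype V] [DecidableEq V] {G : SimpleGraph V} [DecidableRel G.Adj]
  {τ : V → ℤ} {X : Finset V}

lemma untouched (hτ : ∀ u, τ u = 0 ∨ τ u = 1 ∨ τ u = (G.degree u : ℤ))
    {U : Finset V} (hcomp : IsComponentOf G {u | τ u = 0 ∨ τ u = 1} ↑U)
    (hone : ∀ u ∈ U, τ u = 1)
    (hseed : ∀ x ∈ X, x ∉ closedNbhdFinset G U) :
    ∀ s, ∀ u ∈ U, u ∉ activation G τ X s := by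
  intro s
  induction s using Nat.strong_induction_on with
  | _ s ih =>
  intro u hu hus
  cases s with
  | zero =>
    exact hseed u hus (Finset.mem_union_left _ hu)
  | succ n =>
    obtain ⟨v, hadj, hv⟩ := act_one_elim (hone u hu) hus
    by_cases hvlow : τ v = 0 ∨ τ v = 1
    · have hvU : v ∈ (↑U : Set V) := hcomp.2.2.2 u (Finset.mem_coe.mpr hu) v hvlow hadj
      exact ih n (by omega) v (Finset.mem_coe.mp hvU) hv
    · have hvd : τ v = (G.degree v : ℤ) := by
        rcases hτ v with h | h | h
        · exact absurd (Or.inl h) hvlow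
        · exact absurd (Or.inr h) hvlow
        · exact h
      cases n with
      | zero =>
        refine hseed v hv (Finset.mem_union_right _ ?_)
        exact Finset.mem_filter.mpr ⟨Finset.mem_univ _, ⟨u, hu, hadj⟩⟩
      | succ m =>
        have := act_deg_elim hvd hv u ((SimpleGraph.mem_neighborFinset G v u).mpr (G.adj_symm hadj))
        exact ih m (by omega) u hu this

lemma bip_invariant (hτ : ∀ u, τ u = 0 ∨ τ u = 1 ∨ τ u = (G.degree u : ℤ))
    {U A B : Finset V} (hcomp : IsComponentOf G {u | τ u = 0 ∨ τ u = 1} ↑U)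
    (hone : ∀ u ∈ U, τ u = 1)
    (hAB : A ∪ B = U) (hdisj : Disjoint A B)
    (hindA : ∀ a ∈ A, ∀ a' ∈ A, ¬ G.Adj a a')
    (hindB : ∀ b ∈ B, ∀ b' ∈ B, ¬ G.Adj b b')
    (hseed : ¬ ∃ x ∈ X, x ∈ (↑A : Set V) ∪ (openNbhd G ↑B \ closedNbhd G ↑A) ∪
        (openNbhd G ↑A ∩ openNbhd G ↑B)) :
    ∀ s, (s % 2 = 0 → ∀ a ∈ A, a ∉ activation G τ X s) ∧
         (s % 2 = 1 → ∀ b ∈ B, b ∉ activation G τ X s) := by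
  push_neg at hseed
  intro s
  induction s using Nat.strong_induction_on with
  | _ s ih =>
  have hAU : ∀ a ∈ A, a ∈ U := fun a ha => by rw [← hAB]; exact Finset.mem_union_left _ ha
  have hBU : ∀ b ∈ B, b ∈ U := fun b hb => by rw [← hAB]; exact Finset.mem_union_right _ hb
  have hUlow : ∀ u ∈ U, τ u = 0 ∨ τ u = 1 := fun u hu => hcomp.1 (Finset.mem_coe.mpr hu)
  constructor
  · intro hs a ha has
    cases s with
    | zero =>
      exact hseed a has (Or.inl (Or.inl (Finset.mem_coe.mpr ha)))
    | succ n =>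
      obtain ⟨v, hadj, hv⟩ := act_one_elim (hone a (hAU a ha)) has
      by_cases hvlow : τ v = 0 ∨ τ v = 1
      · have hvU : v ∈ U := by
          have := hcomp.2.2.2 a (Finset.mem_coe.mpr (hAU a ha)) v hvlow hadj
          exact Finset.mem_coe.mp this
        rw [← hAB] at hvU
        rcases Finset.mem_union.mp hvU with hvA | hvB
        · exact hindA a ha v hvA hadj
        · exact (ih n (by omega)).2 (by omega) v hvB hv
      · have hvd : τ v = (G.degree v : ℤ) := by
          rcases hτ v with h | h | h
          · exact absurd (Or.inl h) hvlow
          · exact absurd (Or.inr h) hvlow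
          · exact h
        cases n with
        | zero => omega
        | succ m =>
          have := act_deg_elim hvd hv a ((SimpleGraph.mem_neighborFinset G v a).mpr (G.adj_symm hadj))
          exact (ih m (by omega)).1 (by omega) a ha this
  · intro hs b hb hbs
    cases s with
    | zero => omega
    | succ n =>
      obtain ⟨v, hadj, hv⟩ := act_one_elim (hone b (hBU b hb)) hbs
      by_cases hvlow : τ v = 0 ∨ τ v = 1
      · have hvU : v ∈ U := by
          have := hcomp.2.2.2 b (Finset.mem_coe.mpr (hBU b hb)) v hvlow hadj
          exact Finset.mem_coe.mp this
        rw [← hAB] at hvU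
        rcases Finset.mem_union.mp hvU with hvA | hvB
        · exact (ih n (by omega)).1 (by omega) v hvA hv
        · exact hindB b hb v hvB hadj
      · have hvd : τ v = (G.degree v : ℤ) := by
          rcases hτ v with h | h | h
          · exact absurd (Or.inl h) hvlow
          · exact absurd (Or.inr h) hvlow
          · exact h
        cases n with
        | zero =>
          refine hseed v hv ?_
          have hvnotU : v ∉ U := fun hvU => hvlow (hUlow v hvU)
          have hvopenB : v ∈ openNbhd G (↑B : Set V) := by
            refine ⟨fun hvB => hvnotU (hBU v (Finset.mem_coe.mp hvB)), ⟨b, Finset.mem_coe.mpr hb, hadj⟩⟩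
          by_cases hvA' : v ∈ openNbhd G (↑A : Set V)
          · exact Or.inr ⟨hvA', hvopenB⟩
          · refine Or.inl (Or.inr ⟨hvopenB, ?_⟩)
            rintro (hvA | hvA)
            · exact hvnotU (hAU v (Finset.mem_coe.mp hvA))
            · exact hvA' hvA
        | succ m =>
          have := act_deg_elim hvd hv b ((SimpleGraph.mem_neighborFinset G v b).mpr (G.adj_symm hadj))
          exact (ih m (by omega)).2 (by omega) b hb this

lemma desc_two {u : V} (hu1 : τ u = 1)
    (hnb : ∀ v, G.Adj u v → τ v = (G.degree v : ℤ)) :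
    ∀ s, u ∈ activation G τ X (s + 2) → u ∈ activation G τ X s := by
  intro s hu
  obtain ⟨v, hadj, hv⟩ := act_one_elim hu1 hu
  exact act_deg_elim (hnb v hadj) hv u ((SimpleGraph.mem_neighborFinset G v u).mpr (G.adj_symm hadj))

lemma desc_iter {u : V} (hu1 : τ u = 1)
    (hnb : ∀ v, G.Adj u v → τ v = (G.degree v : ℤ)) :
    ∀ m r, u ∈ activation G τ X (r + 2 * m) → u ∈ activation G τ X r := by
  intro m
  induction m with
  | zero => intro r h; simpa using h
  | succ m ih =>
    intro r h
    refine ih r (desc_two hu1 hnb (r + 2 * m) ?_)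
    rw [show r + 2 * m + 2 = r + 2 * (m + 1) from by omega]
    exact h

end Nec

section Suf
variable {V : Type*} [Fintype V] [DecidableEq V] {G : SimpleGraph V} [DecidableRel G.Adj]
  {τ : V → ℤ} {X : Finset V}

lemma walk_parity {S : Set V} {A B : Finset V} (hAB : (↑A ∪ ↑B : Set V) = S)
    (hindA : ∀ a ∈ A, ∀ a' ∈ A, ¬ G.Adj a a')
    (hindB : ∀ b ∈ B, ∀ b' ∈ B, ¬ G.Adj b b')
    {a b : S} (w : (restrict G S).Walk a b) :
    (w.length + (if (a : V) ∈ A then 0 else 1) + (if (b : V) ∈ A then 0 else 1)) % 2 = 0 := by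
  induction w with
  | nil => rw [SimpleGraph.Walk.length_nil]; omega
  | @cons x c y h p ih =>
    have hmem : ∀ z : S, (z : V) ∉ A → (z : V) ∈ B := by
      intro z hz
      have hzS : (z : V) ∈ (↑A ∪ ↑B : Set V) := by rw [hAB]; exact z.2
      rcases hzS with hzA | hzB
      · exact absurd (Finset.mem_coe.mp hzA) hz
      · exact Finset.mem_coe.mp hzB
    have hadj : G.Adj (x : V) (c : V) := h
    have hflip : (if (x : V) ∈ A then (0:ℕ) else 1) + (if (c : V) ∈ A then (0:ℕ) else 1) = 1 := by
      by_cases hx : (x : V) ∈ A <;> by_cases hc : (c : V) ∈ A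
      · exact absurd hadj (hindA _ hx _ hc)
      · simp [hx, hc]
      · simp [hx, hc]
      · exact absurd hadj (hindB _ (hmem x hx) _ (hmem c hc))
    rw [SimpleGraph.Walk.length_cons]
    omega

lemma perm_of_bip {S : Set V} {A B : Finset V} (hall : ∀ w ∈ S, τ w = 1)
    (hconn : (restrict G S).Connected)
    (hnbr : ∀ z : S, ∃ w, (restrict G S).Adj z w)
    (hAB : (↑A ∪ ↑B : Set V) = S)
    (hindA : ∀ a ∈ A, ∀ a' ∈ A, ¬ G.Adj a a')
    (hindB : ∀ b ∈ B, ∀ b' ∈ B, ¬ G.Adj b b')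
    (hseed0 : ∃ u₀ ∈ S, ∃ s₀, u₀ ∈ activation G τ X s₀ ∧
      (s₀ + (if u₀ ∈ A then 0 else 1)) % 2 = 0)
    (hseed1 : ∃ u₀ ∈ S, ∃ s₀, u₀ ∈ activation G τ X s₀ ∧
      (s₀ + (if u₀ ∈ A then 0 else 1)) % 2 = 1) :
    ∀ u ∈ S, perm G τ X u := by
  intro u huS
  obtain ⟨cS, hcadj⟩ := hnbr ⟨u, huS⟩
  have hpad : ∀ e, u ∈ activation G τ X e → ∀ m, u ∈ activation G τ X (e + 2 * m) := by
    intro e he m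
    induction m with
    | zero => simpa using he
    | succ m ih =>
      have := act_step2 (hall u huS) (hall ↑cS cS.2) hcadj (e + 2 * m) ih
      rw [show e + 2 * (m + 1) = e + 2 * m + 2 from by omega]
      exact this
  have key : ∀ p : ℕ, (∃ u₀ ∈ S, ∃ s₀, u₀ ∈ activation G τ X s₀ ∧
      (s₀ + (if u₀ ∈ A then 0 else 1)) % 2 = p) →
      ∃ e, u ∈ activation G τ X e ∧ (e + (if u ∈ A then 0 else 1)) % 2 = p := by
    rintro p ⟨u₀, hu₀S, s₀, hact, hpar⟩
    obtain ⟨w⟩ := hconn.preconnected ⟨u₀, hu₀S⟩ ⟨u, huS⟩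
    refine ⟨s₀ + w.length, act_walk hall w s₀ hact, ?_⟩
    have h' := walk_parity hAB hindA hindB w
    have h'' : (w.length + (if u₀ ∈ A then 0 else 1) + (if u ∈ A then 0 else 1)) % 2 = 0 := h'
    omega
  obtain ⟨e0, he0, hp0⟩ := key 0 hseed0
  obtain ⟨e1, he1, hp1⟩ := key 1 hseed1
  refine ⟨e0 + e1, fun t ht => ?_⟩
  by_cases hpar : (t - e0) % 2 = 0
  · rw [show t = e0 + 2 * ((t - e0) / 2) from by omega]
    exact hpad e0 he0 _
  · rw [show t = e1 + 2 * ((t - e1) / 2) from by omega]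
    exact hpad e1 he1 _

lemma perm_of_nonbip {S : Set V} (hall : ∀ w ∈ S, τ w = 1)
    (hconn : (restrict G S).Connected)
    (hnbr : ∀ z : S, ∃ w, (restrict G S).Adj z w)
    (hnb : ¬ (restrict G S).Colorable 2)
    (hseed : ∃ u₀ ∈ S, ∃ s₀, u₀ ∈ activation G τ X s₀) :
    ∀ u ∈ S, perm G τ X u := by
  obtain ⟨x₀, wodd, hodd⟩ := exists_odd_closed_walk hconn hnb
  obtain ⟨u₀, hu₀S, s₀, hs₀⟩ := hseed
  intro u huS
  obtain ⟨cS, hcadj⟩ := hnbr ⟨u, huS⟩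
  have hpad : ∀ e, u ∈ activation G τ X e → ∀ m, u ∈ activation G τ X (e + 2 * m) := by
    intro e he m
    induction m with
    | zero => simpa using he
    | succ m ih =>
      have := act_step2 (hall u huS) (hall ↑cS cS.2) hcadj (e + 2 * m) ih
      rw [show e + 2 * (m + 1) = e + 2 * m + 2 from by omega]
      exact this
  obtain ⟨w1⟩ := hconn.preconnected ⟨u₀, hu₀S⟩ x₀
  obtain ⟨w2⟩ := hconn.preconnected x₀ ⟨u, huS⟩
  have he0 : u ∈ activation G τ X (s₀ + (w1.append w2).length) :=
    act_walk hall (w1.append w2) s₀ hs₀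
  have he1 : u ∈ activation G τ X (s₀ + (w1.append (wodd.append w2)).length) :=
    act_walk hall (w1.append (wodd.append w2)) s₀ hs₀
  have hlen0 : (w1.append w2).length = w1.length + w2.length :=
    SimpleGraph.Walk.length_append _ _
  have hlen1 : (w1.append (wodd.append w2)).length = w1.length + (wodd.length + w2.length) := by
    rw [SimpleGraph.Walk.length_append, SimpleGraph.Walk.length_append]
  obtain ⟨k, hk⟩ := hodd
  set e0 := s₀ + (w1.append w2).length with hde0
  set e1 := s₀ + (w1.append (wodd.append w2)).length with hde1
  refine ⟨e0 + e1, fun t ht => ?_⟩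
  by_cases hpar : (t - e0) % 2 = 0
  · rw [show t = e0 + 2 * ((t - e0) / 2) from by omega]
    exact hpad e0 he0 _
  · rw [show t = e1 + 2 * ((t - e1) / 2) from by omega]
    exact hpad e1 he1 _

lemma exists_edge_of_comp {U : Finset V} (hconn : (G.induce (↑U : Set V)).Connected)
    (hcard : 2 ≤ U.card) : ∃ a ∈ U, ∃ b ∈ U, G.Adj a b := by
  obtain ⟨x, hx, y, hy, hxy⟩ := Finset.one_lt_card.mp hcard
  have hne : (⟨x, Finset.mem_coe.mpr hx⟩ : (↑U : Set V)) ≠ ⟨y, Finset.mem_coe.mpr hy⟩ :=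
    fun h => hxy (congrArg Subtype.val h)
  obtain ⟨w, hw⟩ := exists_adj_of_preconnected hconn.preconnected hne ⟨x, Finset.mem_coe.mpr hx⟩
  exact ⟨x, hx, ↑w, Finset.mem_coe.mp w.2, hw⟩

end Suf
theorem stmt_17 {V : Type*} [Fintype V] [DecidableEq V] (G : SimpleGraph V)
    [DecidableRel G.Adj] (τ : V → ℤ)
    (hτ : ∀ u, τ u = 0 ∨ τ u = 1 ∨ τ u = (G.degree u : ℤ))
    (hedge : ∀ u v, G.Adj u v →
      ¬ (τ u = (G.degree u : ℤ) ∧ τ v = (G.degree v : ℤ)))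
    (X : Finset V) :
    IsTargetSet G τ X ↔
      ((∀ U : Finset V, IsComponentOf G {u | τ u = 0 ∨ τ u = 1} ↑U → 2 ≤ U.card →
          (∀ u ∈ U, τ u = 1) →
          (¬ (restrict G (↑U : Set V)).Colorable 2 → (X ∩ closedNbhdFinset G U).Nonempty) ∧
          (∀ A B : Finset V, A ∪ B = U → Disjoint A B →
            (∀ a ∈ A, ∀ a' ∈ A, ¬ G.Adj a a') → (∀ b ∈ B, ∀ b' ∈ B, ¬ G.Adj b b') →
            (∃ x ∈ X, x ∈ (↑A : Set V) ∪ (openNbhd G ↑B \ closedNbhd G ↑A) ∪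
                (openNbhd G ↑A ∩ openNbhd G ↑B)) ∧
            (∃ x ∈ X, x ∈ (↑B : Set V) ∪ (openNbhd G ↑A \ closedNbhd G ↑B) ∪
                (openNbhd G ↑A ∩ openNbhd G ↑B)))) ∧
        (∀ u : V, τ u = 1 → (∀ v, G.Adj u v → τ v = (G.degree v : ℤ)) →
          ∃ v₁ v₂ : V, G.Adj u v₁ ∧ G.Adj u v₂ ∧ v₁ ∈ X ∧ G.neighborFinset v₂ ⊆ X)) := by 
  constructor
  · rintro ⟨t₀, ht₀⟩
    constructor
    · intro U hcomp hcard hone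
      constructor
      · intro _hnb
        by_contra hempty
        rw [Finset.not_nonempty_iff_eq_empty] at hempty
        have hseed : ∀ x ∈ X, x ∉ closedNbhdFinset G U := by
          intro x hx hmem
          have hmem2 : x ∈ X ∩ closedNbhdFinset G U := Finset.mem_inter.mpr ⟨hx, hmem⟩
          rw [hempty] at hmem2
          exact absurd hmem2 (Finset.notMem_empty x)
        obtain ⟨u, hu⟩ := Finset.card_pos.mp (by omega : 0 < U.card)
        refine untouched hτ hcomp hone hseed t₀ u hu ?_
        rw [ht₀ t₀ le_rfl]
        exact Finset.mem_univ u
      · intro A B hABU hdisj hindA hindB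
        have hedgeU : ∃ a ∈ U, ∃ b ∈ U, G.Adj a b :=
          exists_edge_of_comp hcomp.2.2.1 hcard
        constructor
        · by_contra hno
          have hinv := bip_invariant hτ hcomp hone hABU hdisj hindA hindB hno
          have hAne : A.Nonempty := by
            rcases A.eq_empty_or_nonempty with hAe | h
            · exfalso
              obtain ⟨a, ha, b, hb, hab⟩ := hedgeU
              rw [hAe, Finset.empty_union] at hABU
              refine hindB a ?_ b ?_ hab
              · rw [hABU]; exact ha
              · rw [hABU]; exact hb
            · exact h
          obtain ⟨a, ha⟩ := hAne
          refine (hinv (2 * t₀)).1 (by omega) a ha ?_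
          rw [ht₀ (2 * t₀) (by omega)]
          exact Finset.mem_univ a
        · by_contra hno
          have hno' : ¬ ∃ x ∈ X, x ∈ (↑B : Set V) ∪ (openNbhd G ↑A \ closedNbhd G ↑B) ∪
              (openNbhd G ↑B ∩ openNbhd G ↑A) := by
            rw [Set.inter_comm (openNbhd G (↑B : Set V))]
            exact hno
          have hinv := bip_invariant hτ hcomp hone (by rw [Finset.union_comm]; exact hABU)
            hdisj.symm hindB hindA hno'
          have hBne : B.Nonempty := by
            rcases B.eq_empty_or_nonempty with hBe | h
            · exfalso
              obtain ⟨a, ha, b, hb, hab⟩ := hedgeU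
              rw [hBe, Finset.union_empty] at hABU
              refine hindA a ?_ b ?_ hab
              · rw [hABU]; exact ha
              · rw [hABU]; exact hb
            · exact h
          obtain ⟨b, hb⟩ := hBne
          refine (hinv (2 * t₀)).1 (by omega) b hb ?_
          rw [ht₀ (2 * t₀) (by omega)]
          exact Finset.mem_univ b
    · intro u hu1 hnb
      have ha2 : u ∈ activation G τ X (t₀ + 2) := by
        rw [ht₀ (t₀ + 2) (by omega)]; exact Finset.mem_univ u
      have ha3 : u ∈ activation G τ X (t₀ + 3) := by
        rw [ht₀ (t₀ + 3) (by omega)]; exact Finset.mem_univ u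
      have h12 : u ∈ activation G τ X 1 ∧ u ∈ activation G τ X 2 := by
        rcases Nat.even_or_odd t₀ with ⟨k, hk⟩ | ⟨k, hk⟩
        · constructor
          · refine desc_iter hu1 hnb (k + 1) 1 ?_
            rw [show 1 + 2 * (k + 1) = t₀ + 3 from by omega]; exact ha3
          · refine desc_iter hu1 hnb k 2 ?_
            rw [show 2 + 2 * k = t₀ + 2 from by omega]; exact ha2
        · constructor
          · refine desc_iter hu1 hnb (k + 1) 1 ?_
            rw [show 1 + 2 * (k + 1) = t₀ + 2 from by omega]; exact ha2
          · refine desc_iter hu1 hnb (k + 1) 2 ?_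
            rw [show 2 + 2 * (k + 1) = t₀ + 3 from by omega]; exact ha3
      obtain ⟨v₁, hadj1, hv1⟩ := act_one_elim hu1 h12.1
      obtain ⟨v₂, hadj2, hv2⟩ := act_one_elim hu1 h12.2
      exact ⟨v₁, v₂, hadj1, hadj2, hv1,
        fun w hw => act_deg_elim (hnb v₂ hadj2) hv2 w hw⟩
  · rintro ⟨h1, h2⟩
    classical
    have hlowperm : ∀ v, τ v = 0 ∨ τ v = 1 → perm G τ X v := by
      intro v hvlow0
      rcases hvlow0 with hv0 | hv1
      · exact perm_zero hv0
      have hvL : v ∈ {u | τ u = 0 ∨ τ u = 1} := Or.inr hv1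
      by_cases hzz : ∃ z : {u | τ u = 0 ∨ τ u = 1},
          (restrict G {u | τ u = 0 ∨ τ u = 1}).Reachable ⟨v, hvL⟩ z ∧ τ ↑z = 0
      · obtain ⟨z, hr, hz0⟩ := hzz
        exact perm_spread (fun w hw => hw) z ⟨v, hvL⟩ hr.symm (perm_zero hz0)
      · push_neg at hzz
        have hreach1 : ∀ z : {u | τ u = 0 ∨ τ u = 1},
            (restrict G {u | τ u = 0 ∨ τ u = 1}).Reachable ⟨v, hvL⟩ z → τ ↑z = 1 :=
          fun z hr => (z.2).resolve_left (hzz z hr)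
        by_cases hnolow : ∃ w, G.Adj v w ∧ (τ w = 0 ∨ τ w = 1)
        · -- component of size ≥ 2
          obtain ⟨w₀, hw₀adj, hw₀low⟩ := hnolow
          set Lset : Set V := {u | τ u = 0 ∨ τ u = 1} with hLdef
          set R := restrict G Lset with hRdef
          set vL : Lset := (⟨v, hvL⟩ : Lset) with hvLdef
          set Uset : Set V := {w | ∃ hw : w ∈ Lset, R.Reachable vL ⟨w, hw⟩} with hUdef
          have hUfin : Uset.Finite := Set.toFinite _
          set U : Finset V := hUfin.toFinset with hUdef2
          have hUcoe : (↑U : Set V) = Uset := Set.Finite.coe_toFinset _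
          have hUmem : ∀ w, w ∈ U ↔ w ∈ Uset := fun w => Set.Finite.mem_toFinset _
          have hvU : v ∈ Uset := ⟨hvL, SimpleGraph.Reachable.refl _⟩
          have hUsub : Uset ⊆ Lset := fun w hw => hw.1
          have honeS : ∀ u' ∈ Uset, τ u' = 1 := by
            intro u' hu'
            obtain ⟨hw, hr⟩ := hu'
            exact hreach1 ⟨u', hw⟩ hr
          have hone : ∀ u' ∈ U, τ u' = 1 := fun u' hu' => honeS u' ((hUmem u').mp hu')
          have hclosure : ∀ a ∈ Uset, ∀ b ∈ Lset, G.Adj a b → b ∈ Uset := by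
            intro a ha b hb hadj
            obtain ⟨haL, hra⟩ := ha
            exact ⟨hb, hra.trans (SimpleGraph.Adj.reachable
              (show R.Adj ⟨a, haL⟩ ⟨b, hb⟩ from hadj))⟩
          have htrans : ∀ (a b : Lset) (w : R.Walk a b) (ha : (a : V) ∈ Uset)
              (hb : (b : V) ∈ Uset),
              (restrict G Uset).Reachable ⟨↑a, ha⟩ ⟨↑b, hb⟩ := by
            intro a b w
            induction w with
            | nil => intro ha hb; exact SimpleGraph.Reachable.refl _
            | @cons x c y h p ih =>
              intro ha hb
              have hc : (c : V) ∈ Uset := hclosure ↑x ha ↑c c.2 h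
              exact (SimpleGraph.Adj.reachable
                (show (restrict G Uset).Adj ⟨↑x, ha⟩ ⟨↑c, hc⟩ from h)).trans (ih hc hb)
          have hconnS : (restrict G Uset).Connected := by
            rw [SimpleGraph.connected_iff]
            refine ⟨fun x y => ?_, ⟨⟨v, hvU⟩⟩⟩
            obtain ⟨hxL, hrx⟩ := x.2
            obtain ⟨hyL, hry⟩ := y.2
            obtain ⟨wx⟩ := hrx
            obtain ⟨wy⟩ := hry
            exact (htrans vL ⟨↑x, hxL⟩ wx hvU x.2).symm.trans (htrans vL ⟨↑y, hyL⟩ wy hvU y.2)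
          have hconnU : (restrict G (↑U : Set V)).Connected := by
            rw [hUcoe]; exact hconnS
          have hcomp : IsComponentOf G {u | τ u = 0 ∨ τ u = 1} (↑U : Set V) := by
            rw [hUcoe]
            exact ⟨hUsub, ⟨v, hvU⟩, hconnS, hclosure⟩
          have hw₀U : w₀ ∈ Uset := hclosure v hvU w₀ hw₀low hw₀adj
          have hcard : 2 ≤ U.card := by
            have hne : v ≠ w₀ := G.ne_of_adj hw₀adj
            have hsub : ({v, w₀} : Finset V) ⊆ U := by
              intro z hz
              rcases Finset.mem_insert.mp hz with rfl | hz'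
              · exact (hUmem z).mpr hvU
              · rw [Finset.mem_singleton] at hz'
                subst hz'
                exact (hUmem z).mpr hw₀U
            calc 2 = ({v, w₀} : Finset V).card := (Finset.card_pair hne).symm
              _ ≤ U.card := Finset.card_le_card hsub
          obtain ⟨hc1, hc2⟩ := h1 U hcomp hcard hone
          have hnbrU : ∀ z : (↑U : Set V), ∃ w, (restrict G (↑U : Set V)).Adj z w := by
            have hnev : (⟨v, (by rw [hUcoe]; exact hvU)⟩ : (↑U : Set V)) ≠
                ⟨w₀, (by rw [hUcoe]; exact hw₀U)⟩ :=
              fun hh => (G.ne_of_adj hw₀adj) (congrArg Subtype.val hh)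
            exact fun z => exists_adj_of_preconnected hconnU.preconnected hnev z
          have honeU : ∀ u' ∈ (↑U : Set V), τ u' = 1 := by
            rw [hUcoe]; exact honeS
          by_cases hcol : (restrict G (↑U : Set V)).Colorable 2
          · -- bipartite case
            obtain ⟨c⟩ := hcol
            set Af : Finset V := U.filter (fun w => ∃ h : w ∈ (↑U : Set V), c ⟨w, h⟩ = 0)
              with hAfdef
            set Bf : Finset V := U.filter (fun w => ∃ h : w ∈ (↑U : Set V), c ⟨w, h⟩ ≠ 0)
              with hBfdef
            have hmemU : ∀ w ∈ U, w ∈ (↑U : Set V) := fun w hw => Finset.mem_coe.mpr hw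
            have hABU : Af ∪ Bf = U := by
              ext z
              simp only [hAfdef, hBfdef, Finset.mem_union, Finset.mem_filter]
              constructor
              · rintro (⟨h, _⟩ | ⟨h, _⟩) <;> exact h
              · intro hz
                by_cases hc0 : c ⟨z, hmemU z hz⟩ = 0
                · exact Or.inl ⟨hz, ⟨hmemU z hz, hc0⟩⟩
                · exact Or.inr ⟨hz, ⟨hmemU z hz, hc0⟩⟩
            have hdisjAB : Disjoint Af Bf := by
              rw [Finset.disjoint_left]
              intro z hzA hzB
              obtain ⟨hzU, hpf, he0⟩ := Finset.mem_filter.mp hzA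
              obtain ⟨hzU', hpf', hne⟩ := Finset.mem_filter.mp hzB
              exact hne he0
            have hvalid : ∀ {a b : V} (ha : a ∈ (↑U : Set V)) (hb : b ∈ (↑U : Set V)),
                G.Adj a b → c ⟨a, ha⟩ ≠ c ⟨b, hb⟩ := by
              intro a b ha hb hadj
              exact c.valid (show (restrict G (↑U : Set V)).Adj ⟨a, ha⟩ ⟨b, hb⟩ from hadj)
            have hfin2 : ∀ x : Fin 2, x ≠ 0 → x = 1 := by decide
            have hindAf : ∀ a ∈ Af, ∀ a' ∈ Af, ¬ G.Adj a a' := by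
              intro a ha a' ha' hadj
              obtain ⟨haU, hpa, hea⟩ := Finset.mem_filter.mp ha
              obtain ⟨haU', hpa', hea'⟩ := Finset.mem_filter.mp ha'
              exact hvalid hpa hpa' hadj (by rw [hea, hea'])
            have hindBf : ∀ a ∈ Bf, ∀ a' ∈ Bf, ¬ G.Adj a a' := by
              intro a ha a' ha' hadj
              obtain ⟨haU, hpa, hea⟩ := Finset.mem_filter.mp ha
              obtain ⟨haU', hpa', hea'⟩ := Finset.mem_filter.mp ha'
              exact hvalid hpa hpa' hadj (by rw [hfin2 _ hea, hfin2 _ hea'])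
            obtain ⟨hs0, hs1⟩ := hc2 Af Bf hABU hdisjAB hindAf hindBf
            have hAfU : ∀ a ∈ Af, a ∈ U := fun a ha => (Finset.mem_filter.mp ha).1
            have hBfU : ∀ b ∈ Bf, b ∈ U := fun b hb => (Finset.mem_filter.mp hb).1
            have hBfnotA : ∀ b ∈ Bf, b ∉ Af := fun b hb => Finset.disjoint_right.mp hdisjAB hb
            have mkseed0 : ∃ u₀ ∈ (↑U : Set V), ∃ s₀, u₀ ∈ activation G τ X s₀ ∧
                (s₀ + (if u₀ ∈ Af then 0 else 1)) % 2 = 0 := by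
              obtain ⟨x, hxX, hxmem⟩ := hs0
              have key : (x ∈ (↑Af : Set V)) ∨ (x ∈ openNbhd G (↑Bf : Set V)) := by
                rcases hxmem with (hxA | hxd) | hxi
                · exact Or.inl hxA
                · exact Or.inr hxd.1
                · exact Or.inr hxi.2
              rcases key with hxA | hopen
              · refine ⟨x, hmemU x (hAfU x (Finset.mem_coe.mp hxA)), 0, hxX, ?_⟩
                rw [if_pos (Finset.mem_coe.mp hxA)]
              · obtain ⟨hnB, b, hbB, hbadj⟩ := hopen
                have hbBf : b ∈ Bf := Finset.mem_coe.mp hbB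
                refine ⟨b, hmemU b (hBfU b hbBf), 1,
                  act_one_step (hone b (hBfU b hbBf)) hbadj hxX, ?_⟩
                rw [if_neg (hBfnotA b hbBf)]
            have mkseed1 : ∃ u₀ ∈ (↑U : Set V), ∃ s₀, u₀ ∈ activation G τ X s₀ ∧
                (s₀ + (if u₀ ∈ Af then 0 else 1)) % 2 = 1 := by
              obtain ⟨x, hxX, hxmem⟩ := hs1
              have key : (x ∈ (↑Bf : Set V)) ∨ (x ∈ openNbhd G (↑Af : Set V)) := by
                rcases hxmem with (hxB | hxd) | hxi
                · exact Or.inl hxB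
                · exact Or.inr hxd.1
                · exact Or.inr hxi.1
              rcases key with hxB | hopen
              · refine ⟨x, hmemU x (hBfU x (Finset.mem_coe.mp hxB)), 0, hxX, ?_⟩
                rw [if_neg (hBfnotA x (Finset.mem_coe.mp hxB))]
              · obtain ⟨hnA, a, haA, haadj⟩ := hopen
                have haAf : a ∈ Af := Finset.mem_coe.mp haA
                refine ⟨a, hmemU a (hAfU a haAf), 1,
                  act_one_step (hone a (hAfU a haAf)) haadj hxX, ?_⟩
                rw [if_pos haAf]
            have hABcoe : ((↑Af : Set V) ∪ ↑Bf) = (↑U : Set V) := by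
              rw [← Finset.coe_union, hABU]
            exact perm_of_bip honeU hconnU hnbrU hABcoe hindAf hindBf mkseed0 mkseed1 v
              (by rw [hUcoe]; exact hvU)
          · -- non-bipartite case
            obtain ⟨x, hxmem⟩ := hc1 hcol
            obtain ⟨hxX, hxC⟩ := Finset.mem_inter.mp hxmem
            have hseed : ∃ u₀ ∈ (↑U : Set V), ∃ s₀, u₀ ∈ activation G τ X s₀ := by
              rcases Finset.mem_union.mp hxC with hxU | hxN
              · exact ⟨x, Finset.mem_coe.mpr hxU, 0, hxX⟩
              · obtain ⟨-, u', hu'U, hadj⟩ := Finset.mem_filter.mp hxN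
                exact ⟨u', Finset.mem_coe.mpr hu'U, 1, act_one_step (hone u' hu'U) hadj hxX⟩
            exact perm_of_nonbip honeU hconnU hnbrU hcol hseed v (by rw [hUcoe]; exact hvU)
        · -- singleton case
          push_neg at hnolow
          have hallD : ∀ w, G.Adj v w → τ w = (G.degree w : ℤ) := by
            intro w hw
            rcases hτ w with h | h | h
            · exact absurd h (hnolow w hw).1
            · exact absurd h (hnolow w hw).2
            · exact h
          obtain ⟨v₁, v₂, ha1, ha2, hx1, hx2⟩ := h2 v hv1 hallD
          exact ⟨0, fun t _ =>
            perm_sing hτ hedge ha1 ha2 (hallD v₁ ha1) (hallD v₂ ha2) hx1 hx2 t⟩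
    have hperm : ∀ v, perm G τ X v := by
      intro v
      by_cases hvlow : τ v = 0 ∨ τ v = 1
      · exact hlowperm v hvlow
      · have hvd : τ v = (G.degree v : ℤ) := by
          rcases hτ v with h | h | h
          · exact absurd (Or.inl h) hvlow
          · exact absurd (Or.inr h) hvlow
          · exact h
        refine perm_deg hvd (fun w hw => ?_)
        rw [SimpleGraph.mem_neighborFinset] at hw
        refine hlowperm w ?_
        rcases hτ w with h | h | h
        · exact Or.inl h
        · exact Or.inr h
        · exact absurd ⟨hvd, h⟩ (hedge v w hw)
    choose f hf using hperm
    refine ⟨Finset.univ.sup f, fun t ht => ?_⟩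
    rw [Finset.eq_univ_iff_forall]
    intro v
    exact hf v t (le_trans (Finset.le_sup (Finset.mem_univ v)) ht)
end
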